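/- Let C be a hyper-superalgebra over a field of characteristic ≠ 2 and let C̲ = Δ⁻¹(C₀ ⊗ C₀) be the pull-back of the even part along the coproduct. Then C̲ is the largest purely even super-subcoalgebra of C and is a Hopf subalgebra of C (a hyper-algebra), and the even primitives satisfy P(C)₀ = P(C̲). -/

import Mathlib

open TensorProduct


open TensorProduct

section AuxContract

variable {k : Type*} [Field k] {M N P M' N' P' : Type*}
  [AddCommGroup M] [Module k M] [AddCommGroup N] [Module k N]
  [AddCommGroup P] [Module k P] [AddCommGroup M'] [Module k M']
  [AddCommGroup N'] [Module k N'] [AddCommGroup P'] [Module k P']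

/-- Right contraction `m ⊗ n ↦ φ n • m`. -/
noncomputable def crT (φ : N →ₗ[k] k) : M ⊗[k] N →ₗ[k] M :=
  (TensorProduct.rid k M).toLinearMap ∘ₗ LinearMap.lTensor M φ

/-- Left contraction `m ⊗ n ↦ φ m • n`. -/
noncomputable def clT (φ : M →ₗ[k] k) : M ⊗[k] N →ₗ[k] N :=
  (TensorProduct.lid k N).toLinearMap ∘ₗ LinearMap.rTensor N φ

@[simp] lemma crT_tmul (φ : N →ₗ[k] k) (m : M) (n : N) :
    crT φ (m ⊗ₜ[k] n) = φ n • m := by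
  simp [crT]

@[simp] lemma clT_tmul (φ : M →ₗ[k] k) (m : M) (n : N) :
    clT φ (m ⊗ₜ[k] n) = φ m • n := by
  simp [clT]

lemma eq_zero_of_crT (t : M ⊗[k] N) (h : ∀ φ : N →ₗ[k] k, crT φ t = 0) : t = 0 := by
  classical
  let e := Module.Basis.ofVectorSpace k M
  let f := Module.Basis.ofVectorSpace k N
  have key : ∀ (u : M ⊗[k] N) (i : _) (j : _),
      (e.tensorProduct f).repr u (i, j) = e.repr (crT (f.coord j) u) i := by
    intro u i j
    induction u using TensorProduct.induction_on with
    | zero => simp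
    | tmul a b =>
        simp [Module.Basis.tensorProduct_repr_tmul_apply, Module.Basis.coord_apply, mul_comm]
    | add u v hu hv => simp [hu, hv]
  have h0 : (e.tensorProduct f).repr t = 0 := by
    ext ⟨i, j⟩
    rw [key t i j, h (f.coord j)]
    simp
  exact (e.tensorProduct f).repr.map_eq_zero_iff.mp h0

lemma eq_zero_of_clT (t : M ⊗[k] N) (h : ∀ φ : M →ₗ[k] k, clT φ t = 0) : t = 0 := by
  classical
  let e := Module.Basis.ofVectorSpace k M
  let f := Module.Basis.ofVectorSpace k N
  have key : ∀ (u : M ⊗[k] N) (i : _) (j : _),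
      (e.tensorProduct f).repr u (i, j) = f.repr (clT (e.coord i) u) j := by
    intro u i j
    induction u using TensorProduct.induction_on with
    | zero => simp
    | tmul a b =>
        simp [Module.Basis.tensorProduct_repr_tmul_apply, Module.Basis.coord_apply, mul_comm]
    | add u v hu hv => simp [hu, hv]
  have h0 : (e.tensorProduct f).repr t = 0 := by
    ext ⟨i, j⟩
    rw [key t i j, h (e.coord i)]
    simp
  exact (e.tensorProduct f).repr.map_eq_zero_iff.mp h0

lemma crT_rTensor (φ : N →ₗ[k] k) (f : M →ₗ[k] M') (u : M ⊗[k] N) :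
    crT φ (LinearMap.rTensor N f u) = f (crT φ u) := by
  induction u using TensorProduct.induction_on with
  | zero => simp
  | tmul a b => simp
  | add u v hu hv => simp [hu, hv]

lemma clT_lTensor (φ : M →ₗ[k] k) (f : N →ₗ[k] N') (u : M ⊗[k] N) :
    clT φ (LinearMap.lTensor M f u) = f (clT φ u) := by
  induction u using TensorProduct.induction_on with
  | zero => simp
  | tmul a b => simp
  | add u v hu hv => simp [hu, hv]

lemma crT_assoc_symm (φ : P →ₗ[k] k) (w : M ⊗[k] (N ⊗[k] P)) :
    crT φ ((TensorProduct.assoc k M N P).symm w)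
      = LinearMap.lTensor M (crT φ) w := by
  induction w using TensorProduct.induction_on with
  | zero => simp
  | tmul a s =>
      induction s using TensorProduct.induction_on with
      | zero => simp
      | tmul u v => simp [assoc_symm_tmul, tmul_smul]
      | add s s' hs hs' =>
          rw [tmul_add, map_add, map_add, hs, hs', ← map_add, ← tmul_add]
  | add w w' hw hw' => simp [hw, hw']

lemma clT_assoc (φ : M →ₗ[k] k) (t : (M ⊗[k] N) ⊗[k] P) :
    clT φ ((TensorProduct.assoc k M N P) t)
      = LinearMap.rTensor P (clT φ) t := by
  induction t using TensorProduct.induction_on with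
  | zero => simp
  | tmul s c =>
      induction s using TensorProduct.induction_on with
      | zero => simp
      | tmul a b => simp [assoc_tmul, smul_tmul']
      | add s s' hs hs' =>
          rw [add_tmul, map_add, map_add, hs, hs', ← map_add, ← add_tmul]
  | add t t' ht ht' => simp [ht, ht']

lemma map_rTensor_assoc (f : M →ₗ[k] M') (g : N →ₗ[k] N') (t : (M ⊗[k] N) ⊗[k] P) :
    TensorProduct.map f (LinearMap.rTensor P g) ((TensorProduct.assoc k M N P) t)
      = (TensorProduct.assoc k M' N' P) (LinearMap.rTensor P (TensorProduct.map f g) t) := by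
  induction t using TensorProduct.induction_on with
  | zero => simp
  | tmul s c =>
      induction s using TensorProduct.induction_on with
      | zero => simp
      | tmul a b => simp [assoc_tmul]
      | add s s' hs hs' => simp only [add_tmul, map_add, hs, hs']
  | add t t' ht ht' => simp [ht, ht']

lemma map_lTensor_assoc_symm (f : N →ₗ[k] N') (g : P →ₗ[k] P') (w : M ⊗[k] (N ⊗[k] P)) :
    TensorProduct.map (LinearMap.lTensor M f) g ((TensorProduct.assoc k M N P).symm w)
      = (TensorProduct.assoc k M N' P').symm
          (LinearMap.lTensor M (TensorProduct.map f g) w) := by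
  induction w using TensorProduct.induction_on with
  | zero => simp
  | tmul a s =>
      induction s using TensorProduct.induction_on with
      | zero => simp
      | tmul u v => simp [assoc_symm_tmul]
      | add s s' hs hs' => simp only [tmul_add, map_add, hs, hs']
  | add w w' hw hw' => simp [hw, hw']

end AuxContract

section AuxSub

variable {k : Type*} [Field k] {C : Type*} [AddCommGroup C] [Module k C]

lemma mem_range_map_iff (S : Submodule k C) (p : C →ₗ[k] C)
    (h1 : ∀ x ∈ S, p x = x) (h2 : ∀ x, p x ∈ S) (t : C ⊗[k] C) :
    t ∈ LinearMap.range (TensorProduct.map S.subtype S.subtype) ↔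
      TensorProduct.map p p t = t := by
  constructor
  · rintro ⟨u, rfl⟩
    induction u using TensorProduct.induction_on with
    | zero => simp
    | tmul a b => simp [h1 _ a.2, h1 _ b.2]
    | add u v hu hv => simp [hu, hv]
  · intro h
    refine ⟨TensorProduct.map (p.codRestrict S h2) (p.codRestrict S h2) t, ?_⟩
    have : TensorProduct.map S.subtype S.subtype
        (TensorProduct.map (p.codRestrict S h2) (p.codRestrict S h2) t)
        = TensorProduct.map p p t := by
      rw [← LinearMap.comp_apply, ← TensorProduct.map_comp,
        LinearMap.subtype_comp_codRestrict]
    rw [this, h]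

lemma map_pp_eq_self (S : Submodule k C) (p : C →ₗ[k] C)
    (h1 : ∀ x ∈ S, p x = x) (t : C ⊗[k] C)
    (hr : ∀ φ : C →ₗ[k] k, crT φ t ∈ S) (hl : ∀ φ : C →ₗ[k] k, clT φ t ∈ S) :
    TensorProduct.map p p t = t := by
  have step1 : LinearMap.rTensor C p t = t := by
    have h : LinearMap.rTensor C p t - t = 0 := by
      apply eq_zero_of_crT
      intro φ
      rw [map_sub, crT_rTensor, h1 _ (hr φ), sub_self]
    exact sub_eq_zero.mp h
  have step2 : LinearMap.lTensor C p t = t := by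
    have h : LinearMap.lTensor C p t - t = 0 := by
      apply eq_zero_of_clT
      intro φ
      rw [map_sub, clT_lTensor, h1 _ (hl φ), sub_self]
    exact sub_eq_zero.mp h
  calc TensorProduct.map p p t = LinearMap.lTensor C p (LinearMap.rTensor C p t) := by
        rw [← LinearMap.comp_apply, LinearMap.lTensor_comp_rTensor]
    _ = t := by rw [step1, step2]

end AuxSub

section AuxInd

variable {k : Type*} [Field k] {C : Type*} [AddCommGroup C] [Module k C]
  {M : Type*} [AddCommGroup M] [Module k M]

lemma R_ind (S T : Submodule k C) (F G : C ⊗[k] C →ₗ[k] M)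
    (h : ∀ a ∈ S, ∀ b ∈ T, F (a ⊗ₜ[k] b) = G (a ⊗ₜ[k] b)) :
    ∀ t ∈ LinearMap.range (TensorProduct.map S.subtype T.subtype), F t = G t := by
  rintro _ ⟨u, rfl⟩
  induction u using TensorProduct.induction_on with
  | zero => simp
  | tmul a b => simpa using h a a.2 b b.2
  | add u v hu hv => simp [hu, hv]

lemma R_ind_mem (S T : Submodule k C) (P : Submodule k M) (F : C ⊗[k] C →ₗ[k] M)
    (h : ∀ a ∈ S, ∀ b ∈ T, F (a ⊗ₜ[k] b) ∈ P) :
    ∀ t ∈ LinearMap.range (TensorProduct.map S.subtype T.subtype), F t ∈ P := by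
  rintro _ ⟨u, rfl⟩
  induction u using TensorProduct.induction_on with
  | zero => simpa using P.zero_mem
  | tmul a b => simpa using h a a.2 b b.2
  | add u v hu hv =>
      rw [map_add, map_add]
      exact P.add_mem hu hv

end AuxInd

section AuxProj

variable {k : Type*} [Field k] {C : Type*} [Ring C] [Algebra k C]
  (𝒞 : ZMod 2 → Submodule k C) [GradedAlgebra 𝒞]

/-- Projection onto the `i`-th graded component, as a map `C →ₗ[k] C`. -/
noncomputable def projC (i : ZMod 2) : C →ₗ[k] C :=
  (𝒞 i).subtype ∘ₗ
    (DFinsupp.lapply i : (DirectSum (ZMod 2) fun j => 𝒞 j) →ₗ[k] 𝒞 i) ∘ₗ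
      (DirectSum.decomposeLinearEquiv 𝒞).toLinearMap

lemma projC_apply (i : ZMod 2) (x : C) : projC 𝒞 i x = ↑(DirectSum.decompose 𝒞 x i) := rfl

lemma projC_mem (i : ZMod 2) (x : C) : projC 𝒞 i x ∈ 𝒞 i := (DirectSum.decompose 𝒞 x i).2

lemma projC_same {i : ZMod 2} {x : C} (hx : x ∈ 𝒞 i) : projC 𝒞 i x = x :=
  DirectSum.decompose_of_mem_same 𝒞 hx

lemma projC_ne {i j : ZMod 2} (hij : i ≠ j) {x : C} (hx : x ∈ 𝒞 i) : projC 𝒞 j x = 0 :=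
  DirectSum.decompose_of_mem_ne 𝒞 hx hij

end AuxProj


set_option maxHeartbeats 2000000
set_option synthInstance.maxHeartbeats 160000

/-- Let `C` be a hyper-superalgebra (a connected superbialgebra, not
necessarily super-commutative) over a field of characteristic ≠ 2, with coproduct `Δ`,
counit `ε`, and Koszul-signed multiplication `M2` on `C ⊗ C`.  Let
`C̲ = Δ⁻¹(C₀ ⊗ C₀)`.  Then `C̲` is the largest purely even super-subcoalgebra of `C`,
it is a (Hopf) subalgebra, and the even primitives satisfy `P(C)₀ = P(C̲)`,
i.e. `P(C) ⊓ C₀ = P(C) ⊓ C̲`. -/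
theorem even_part_of_hyper_superalgebra
    (k : Type*) [Field k] (hchar : (2 : k) ≠ 0)
    (C : Type*) [Ring C] [Algebra k C]
    (𝒞 : ZMod 2 → Submodule k C) [GradedAlgebra 𝒞]
    (Δ : C →ₗ[k] C ⊗[k] C) (ε : C →ₗ[k] k)
    -- Koszul (super) multiplication on `C ⊗ C`:
    (M2 : C ⊗[k] C →ₗ[k] C ⊗[k] C →ₗ[k] C ⊗[k] C)
    (hM2 : ∀ (i j : ZMod 2) (a : C), ∀ b ∈ 𝒞 i, ∀ c ∈ 𝒞 j, ∀ d : C,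
      M2 (a ⊗ₜ[k] b) (c ⊗ₜ[k] d) = ((-1 : ℤ) ^ (i.val * j.val)) • ((a * c) ⊗ₜ[k] (b * d)))
    -- superbialgebra axioms:
    (hΔ_one : Δ 1 = 1 ⊗ₜ[k] 1)
    (hΔ_mul : ∀ x y : C, Δ (x * y) = M2 (Δ x) (Δ y))
    (hcoassoc : (TensorProduct.assoc k C C C).toLinearMap ∘ₗ (LinearMap.rTensor C Δ) ∘ₗ Δ
        = (LinearMap.lTensor C Δ) ∘ₗ Δ)
    (hcounit_l : ∀ x : C, (TensorProduct.lid k C) ((LinearMap.rTensor C ε) (Δ x)) = x)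
    (hcounit_r : ∀ x : C, (TensorProduct.rid k C) ((LinearMap.lTensor C ε) (Δ x)) = x)
    (hε_one : ε 1 = 1)
    -- the comultiplication is graded (a supercoalgebra): even/odd parts map correctly
    (hΔ_graded_even : ∀ x ∈ 𝒞 0, Δ x ∈
        LinearMap.range (TensorProduct.map (𝒞 0).subtype (𝒞 0).subtype) ⊔
        LinearMap.range (TensorProduct.map (𝒞 1).subtype (𝒞 1).subtype))
    (hΔ_graded_odd : ∀ x ∈ 𝒞 1, Δ x ∈
        LinearMap.range (TensorProduct.map (𝒞 0).subtype (𝒞 1).subtype) ⊔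
        LinearMap.range (TensorProduct.map (𝒞 1).subtype (𝒞 0).subtype)) :
    -- define `C̲ := Δ⁻¹(C₀ ⊗ C₀)`
    (Submodule.comap Δ
        (LinearMap.range (TensorProduct.map (𝒞 0).subtype (𝒞 0).subtype)) ≤ 𝒞 0) ∧
    -- `C̲` is a subcoalgebra
    (∀ x ∈ Submodule.comap Δ
        (LinearMap.range (TensorProduct.map (𝒞 0).subtype (𝒞 0).subtype)),
      Δ x ∈ LinearMap.range (TensorProduct.map
        (Submodule.comap Δ
          (LinearMap.range (TensorProduct.map (𝒞 0).subtype (𝒞 0).subtype))).subtype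
        (Submodule.comap Δ
          (LinearMap.range (TensorProduct.map (𝒞 0).subtype (𝒞 0).subtype))).subtype)) ∧
    -- it is the largest purely even subcoalgebra: every subcoalgebra contained in `C₀`
    -- is contained in `C̲`
    (∀ V : Submodule k C, V ≤ 𝒞 0 →
      (∀ x ∈ V, Δ x ∈ LinearMap.range (TensorProduct.map V.subtype V.subtype)) →
      V ≤ Submodule.comap Δ
        (LinearMap.range (TensorProduct.map (𝒞 0).subtype (𝒞 0).subtype))) ∧
    -- `C̲` is a subalgebra (hence a Hopf subalgebra of `C`, a hyper-algebra)
    ((1 : C) ∈ Submodule.comap Δ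
        (LinearMap.range (TensorProduct.map (𝒞 0).subtype (𝒞 0).subtype)) ∧
      ∀ x y : C,
        x ∈ Submodule.comap Δ
          (LinearMap.range (TensorProduct.map (𝒞 0).subtype (𝒞 0).subtype)) →
        y ∈ Submodule.comap Δ
          (LinearMap.range (TensorProduct.map (𝒞 0).subtype (𝒞 0).subtype)) →
        x * y ∈ Submodule.comap Δ
          (LinearMap.range (TensorProduct.map (𝒞 0).subtype (𝒞 0).subtype))) ∧
    -- even primitives: `P(C) ⊓ C₀ = P(C) ⊓ C̲`
    (LinearMap.ker (Δ - ((TensorProduct.mk k C C) 1 + (TensorProduct.mk k C C).flip 1))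
        ⊓ 𝒞 0
      = LinearMap.ker (Δ - ((TensorProduct.mk k C C) 1 + (TensorProduct.mk k C C).flip 1))
        ⊓ Submodule.comap Δ
            (LinearMap.range (TensorProduct.map (𝒞 0).subtype (𝒞 0).subtype))) := by
  classical
  set R00 := LinearMap.range (TensorProduct.map (𝒞 0).subtype (𝒞 0).subtype) with hR00
  set R11 := LinearMap.range (TensorProduct.map (𝒞 1).subtype (𝒞 1).subtype) with hR11
  set U := Submodule.comap Δ R00 with hUdef
  -- basic facts about graded projections
  have hmap_same : ∀ i j : ZMod 2, ∀ t ∈ LinearMap.range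
      (TensorProduct.map (𝒞 i).subtype (𝒞 j).subtype),
      TensorProduct.map (projC 𝒞 i) (projC 𝒞 j) t = t := by
    intro i j
    exact R_ind (𝒞 i) (𝒞 j) _ LinearMap.id (fun a ha b hb => by
      simp [TensorProduct.map_tmul, projC_same 𝒞 ha, projC_same 𝒞 hb])
  have hmap_zero : ∀ i j i' j' : ZMod 2, i ≠ i' ∨ j ≠ j' → ∀ t ∈ LinearMap.range
      (TensorProduct.map (𝒞 i).subtype (𝒞 j).subtype),
      TensorProduct.map (projC 𝒞 i') (projC 𝒞 j') t = 0 := by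
    intro i j i' j' hne
    refine R_ind (𝒞 i) (𝒞 j) _ 0 (fun a ha b hb => ?_)
    rcases hne with h | h
    · simp [TensorProduct.map_tmul, projC_ne 𝒞 h ha]
    · simp [TensorProduct.map_tmul, projC_ne 𝒞 h hb]
  have hrT_same : ∀ i j : ZMod 2, ∀ t ∈ LinearMap.range
      (TensorProduct.map (𝒞 i).subtype (𝒞 j).subtype),
      LinearMap.rTensor C (projC 𝒞 i) t = t := by
    intro i j
    exact R_ind (𝒞 i) (𝒞 j) _ LinearMap.id (fun a ha b hb => by
      simp [projC_same 𝒞 ha])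
  have hrT_zero : ∀ i j i' : ZMod 2, i ≠ i' → ∀ t ∈ LinearMap.range
      (TensorProduct.map (𝒞 i).subtype (𝒞 j).subtype),
      LinearMap.rTensor C (projC 𝒞 i') t = 0 := by
    intro i j i' h
    exact R_ind (𝒞 i) (𝒞 j) _ 0 (fun a ha b hb => by
      simp [projC_ne 𝒞 h ha])
  have hlT_same : ∀ i j : ZMod 2, ∀ t ∈ LinearMap.range
      (TensorProduct.map (𝒞 i).subtype (𝒞 j).subtype),
      LinearMap.lTensor C (projC 𝒞 j) t = t := by
    intro i j
    exact R_ind (𝒞 i) (𝒞 j) _ LinearMap.id (fun a ha b hb => by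
      simp [projC_same 𝒞 hb])
  have hlT_zero : ∀ i j j' : ZMod 2, j ≠ j' → ∀ t ∈ LinearMap.range
      (TensorProduct.map (𝒞 i).subtype (𝒞 j).subtype),
      LinearMap.lTensor C (projC 𝒞 j') t = 0 := by
    intro i j j' h
    exact R_ind (𝒞 i) (𝒞 j) _ 0 (fun a ha b hb => by
      simp [projC_ne 𝒞 h hb])
  have hcr_mem : ∀ (i j : ZMod 2) (φ : C →ₗ[k] k), ∀ t ∈ LinearMap.range
      (TensorProduct.map (𝒞 i).subtype (𝒞 j).subtype), crT φ t ∈ 𝒞 i := by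
    intro i j φ
    exact R_ind_mem (𝒞 i) (𝒞 j) (𝒞 i) (crT φ) (fun a ha b hb => by
      simpa using Submodule.smul_mem _ _ ha)
  have hcl_mem : ∀ (i j : ZMod 2) (φ : C →ₗ[k] k), ∀ t ∈ LinearMap.range
      (TensorProduct.map (𝒞 i).subtype (𝒞 j).subtype), clT φ t ∈ 𝒞 j := by
    intro i j φ
    exact R_ind_mem (𝒞 i) (𝒞 j) (𝒞 j) (clT φ) (fun a ha b hb => by
      simpa using Submodule.smul_mem _ _ hb)
  have hdec : ∀ a ∈ 𝒞 0, ∃ u ∈ R00, ∃ v ∈ R11, Δ a = u + v := by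
    intro a ha
    obtain ⟨u, hu, v, hv, h⟩ := Submodule.mem_sup.mp (hΔ_graded_even a ha)
    exact ⟨u, hu, v, hv, h.symm⟩
  have g1 : ∀ a ∈ 𝒞 0, TensorProduct.map (projC 𝒞 0) (projC 𝒞 1) (Δ a) = 0 := by
    intro a ha
    obtain ⟨u, hu, v, hv, h⟩ := hdec a ha
    rw [h, map_add, hmap_zero 0 0 0 1 (Or.inr (zero_ne_one)) u hu,
      hmap_zero 1 1 0 1 (Or.inl (one_ne_zero)) v hv, add_zero]
  have g2 : ∀ a ∈ 𝒞 0, TensorProduct.map (projC 𝒞 1) (projC 𝒞 0) (Δ a) = 0 := by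
    intro a ha
    obtain ⟨u, hu, v, hv, h⟩ := hdec a ha
    rw [h, map_add, hmap_zero 0 0 1 0 (Or.inl (zero_ne_one)) u hu,
      hmap_zero 1 1 1 0 (Or.inr (one_ne_zero)) v hv, add_zero]
  have hπ0_same : ∀ y ∈ 𝒞 0, projC 𝒞 0 y = y := fun y hy => projC_same 𝒞 hy
  have hπ0_mem : ∀ y : C, projC 𝒞 0 y ∈ 𝒞 0 := projC_mem 𝒞 0
  have h1mem : (1 : C) ∈ 𝒞 0 := SetLike.one_mem_graded 𝒞
  -- Part 1 : U ≤ 𝒞 0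
  have part1 : U ≤ 𝒞 0 := by
    intro x hx
    have hx' : Δ x ∈ R00 := hx
    have hmem := hcl_mem 0 0 ε _ hx'
    have heq : clT ε (Δ x) = x := by
      simpa [clT, LinearMap.comp_apply] using hcounit_l x
    rwa [heq] at hmem
  -- coassociativity, pointwise
  have hco : ∀ x : C, (TensorProduct.assoc k C C C) (LinearMap.rTensor C Δ (Δ x))
      = LinearMap.lTensor C Δ (Δ x) := by
    intro x
    simpa [LinearMap.comp_apply] using LinearMap.congr_fun hcoassoc x
  have hco' : ∀ x : C, LinearMap.rTensor C Δ (Δ x)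
      = (TensorProduct.assoc k C C C).symm (LinearMap.lTensor C Δ (Δ x)) := by
    intro x
    rw [← hco x]
    simp
  -- right contractions stay in U
  have crMem : ∀ x : C, Δ x ∈ R00 → ∀ φ : C →ₗ[k] k, crT φ (Δ x) ∈ U := by
    intro x hx φ
    have claim1 : TensorProduct.map (projC 𝒞 0) (LinearMap.rTensor C (projC 𝒞 1))
        (LinearMap.lTensor C Δ (Δ x)) = 0 := by
      rw [← hco x, map_rTensor_assoc]
      have hz := R_ind (𝒞 0) (𝒞 0)
        ((LinearMap.rTensor C (TensorProduct.map (projC 𝒞 0) (projC 𝒞 1))) ∘ₗ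
          LinearMap.rTensor C Δ) 0
        (fun a ha b hb => by simp [g1 a ha]) (Δ x) hx
      simp only [LinearMap.comp_apply, LinearMap.zero_apply] at hz
      rw [hz]
      exact LinearEquiv.map_zero _
    have hE : Δ (crT φ (Δ x)) = LinearMap.lTensor C ((crT φ) ∘ₗ Δ) (Δ x) := by
      have A1 : ∀ u : C ⊗[k] C, Δ (crT φ u) = crT φ (LinearMap.rTensor C Δ u) := by
        intro u
        induction u using TensorProduct.induction_on with
        | zero => simp
        | tmul a b => simp
        | add u v hu hv => simp [hu, hv]
      rw [A1 (Δ x), hco' x, crT_assoc_symm, ← LinearMap.comp_apply,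
        ← LinearMap.lTensor_comp]
    have stage2 : LinearMap.lTensor C
        ((crT φ) ∘ₗ (TensorProduct.map (projC 𝒞 1) (projC 𝒞 1)) ∘ₗ Δ) (Δ x) = 0 := by
      have heq := R_ind (𝒞 0) (𝒞 0)
        (LinearMap.lTensor C ((crT φ) ∘ₗ (TensorProduct.map (projC 𝒞 1) (projC 𝒞 1)) ∘ₗ Δ))
        ((LinearMap.lTensor C (crT φ)) ∘ₗ
          (TensorProduct.map (projC 𝒞 0) (LinearMap.rTensor C (projC 𝒞 1))) ∘ₗ
            (LinearMap.lTensor C Δ))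
        (fun a ha b hb => by
          obtain ⟨u, hu, v, hv, hΔb⟩ := hdec b hb
          have e1 : TensorProduct.map (projC 𝒞 1) (projC 𝒞 1) (Δ b) = v := by
            rw [hΔb, map_add, hmap_zero 0 0 1 1 (Or.inl zero_ne_one) u hu,
              hmap_same 1 1 v hv, zero_add]
          have e2 : LinearMap.rTensor C (projC 𝒞 1) (Δ b) = v := by
            rw [hΔb, map_add, hrT_zero 0 0 1 zero_ne_one u hu,
              hrT_same 1 1 v hv, zero_add]
          simp only [LinearMap.comp_apply, LinearMap.lTensor_tmul,
            TensorProduct.map_tmul]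
          rw [e1, e2, projC_same 𝒞 ha]) (Δ x) hx
      rw [heq]
      simp only [LinearMap.comp_apply]
      rw [claim1, map_zero]
    have key : TensorProduct.map (projC 𝒞 0) (projC 𝒞 0) (Δ (crT φ (Δ x)))
        = Δ (crT φ (Δ x)) := by
      rw [hE]
      have heq := R_ind (𝒞 0) (𝒞 0)
        ((TensorProduct.map (projC 𝒞 0) (projC 𝒞 0)) ∘ₗ
          LinearMap.lTensor C ((crT φ) ∘ₗ Δ))
        (LinearMap.lTensor C ((crT φ) ∘ₗ Δ) -
          LinearMap.lTensor C
            ((crT φ) ∘ₗ (TensorProduct.map (projC 𝒞 1) (projC 𝒞 1)) ∘ₗ Δ))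
        (fun a ha b hb => by
          obtain ⟨u, hu, v, hv, hΔb⟩ := hdec b hb
          have e1 : TensorProduct.map (projC 𝒞 1) (projC 𝒞 1) (Δ b) = v := by
            rw [hΔb, map_add, hmap_zero 0 0 1 1 (Or.inl zero_ne_one) u hu,
              hmap_same 1 1 v hv, zero_add]
          have e3 : projC 𝒞 0 (crT φ (Δ b)) = crT φ u := by
            rw [hΔb, map_add, map_add, projC_same 𝒞 (hcr_mem 0 0 φ u hu),
              projC_ne 𝒞 one_ne_zero (hcr_mem 1 1 φ v hv), add_zero]
          simp only [LinearMap.comp_apply, LinearMap.sub_apply,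
            LinearMap.lTensor_tmul, TensorProduct.map_tmul]
          rw [e1, e3, projC_same 𝒞 ha, hΔb, map_add, tmul_add,
            add_sub_cancel_right]) (Δ x) hx
      simp only [LinearMap.comp_apply, LinearMap.sub_apply] at heq
      rw [heq, stage2, sub_zero]
    exact Submodule.mem_comap.mpr
      ((mem_range_map_iff (𝒞 0) (projC 𝒞 0) hπ0_same hπ0_mem _).mpr key)
  -- left contractions stay in U
  have clMem : ∀ x : C, Δ x ∈ R00 → ∀ φ : C →ₗ[k] k, clT φ (Δ x) ∈ U := by
    intro x hx φ
    have claim1 : TensorProduct.map (LinearMap.lTensor C (projC 𝒞 1)) (projC 𝒞 0)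
        (LinearMap.rTensor C Δ (Δ x)) = 0 := by
      rw [hco' x, map_lTensor_assoc_symm]
      have hz := R_ind (𝒞 0) (𝒞 0)
        ((LinearMap.lTensor C (TensorProduct.map (projC 𝒞 1) (projC 𝒞 0))) ∘ₗ
          LinearMap.lTensor C Δ) 0
        (fun a ha b hb => by simp [g2 b hb]) (Δ x) hx
      simp only [LinearMap.comp_apply, LinearMap.zero_apply] at hz
      rw [hz]
      exact LinearEquiv.map_zero _
    have hE : Δ (clT φ (Δ x)) = LinearMap.rTensor C ((clT φ) ∘ₗ Δ) (Δ x) := by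
      have A1 : ∀ u : C ⊗[k] C, Δ (clT φ u) = clT φ (LinearMap.lTensor C Δ u) := by
        intro u
        induction u using TensorProduct.induction_on with
        | zero => simp
        | tmul a b => simp
        | add u v hu hv => simp [hu, hv]
      rw [A1 (Δ x), ← hco x, clT_assoc, ← LinearMap.comp_apply,
        ← LinearMap.rTensor_comp]
    have stage2 : LinearMap.rTensor C
        ((clT φ) ∘ₗ (TensorProduct.map (projC 𝒞 1) (projC 𝒞 1)) ∘ₗ Δ) (Δ x) = 0 := by
      have heq := R_ind (𝒞 0) (𝒞 0)
        (LinearMap.rTensor C ((clT φ) ∘ₗ (TensorProduct.map (projC 𝒞 1) (projC 𝒞 1)) ∘ₗ Δ))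
        ((LinearMap.rTensor C (clT φ)) ∘ₗ
          (TensorProduct.map (LinearMap.lTensor C (projC 𝒞 1)) (projC 𝒞 0)) ∘ₗ
            (LinearMap.rTensor C Δ))
        (fun a ha b hb => by
          obtain ⟨u, hu, v, hv, hΔa⟩ := hdec a ha
          have e1 : TensorProduct.map (projC 𝒞 1) (projC 𝒞 1) (Δ a) = v := by
            rw [hΔa, map_add, hmap_zero 0 0 1 1 (Or.inl zero_ne_one) u hu,
              hmap_same 1 1 v hv, zero_add]
          have e2 : LinearMap.lTensor C (projC 𝒞 1) (Δ a) = v := by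
            rw [hΔa, map_add, hlT_zero 0 0 1 zero_ne_one u hu,
              hlT_same 1 1 v hv, zero_add]
          simp only [LinearMap.comp_apply, LinearMap.rTensor_tmul,
            TensorProduct.map_tmul]
          rw [e1, e2, projC_same 𝒞 hb]) (Δ x) hx
      rw [heq]
      simp only [LinearMap.comp_apply]
      rw [claim1, map_zero]
    have key : TensorProduct.map (projC 𝒞 0) (projC 𝒞 0) (Δ (clT φ (Δ x)))
        = Δ (clT φ (Δ x)) := by
      rw [hE]
      have heq := R_ind (𝒞 0) (𝒞 0)
        ((TensorProduct.map (projC 𝒞 0) (projC 𝒞 0)) ∘ₗ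
          LinearMap.rTensor C ((clT φ) ∘ₗ Δ))
        (LinearMap.rTensor C ((clT φ) ∘ₗ Δ) -
          LinearMap.rTensor C
            ((clT φ) ∘ₗ (TensorProduct.map (projC 𝒞 1) (projC 𝒞 1)) ∘ₗ Δ))
        (fun a ha b hb => by
          obtain ⟨u, hu, v, hv, hΔa⟩ := hdec a ha
          have e1 : TensorProduct.map (projC 𝒞 1) (projC 𝒞 1) (Δ a) = v := by
            rw [hΔa, map_add, hmap_zero 0 0 1 1 (Or.inl zero_ne_one) u hu,
              hmap_same 1 1 v hv, zero_add]
          have e3 : projC 𝒞 0 (clT φ (Δ a)) = clT φ u := by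
            rw [hΔa, map_add, map_add, projC_same 𝒞 (hcl_mem 0 0 φ u hu),
              projC_ne 𝒞 one_ne_zero (hcl_mem 1 1 φ v hv), add_zero]
          simp only [LinearMap.comp_apply, LinearMap.sub_apply,
            LinearMap.rTensor_tmul, TensorProduct.map_tmul]
          rw [e1, e3, projC_same 𝒞 hb, hΔa, map_add, add_tmul,
            add_sub_cancel_right]) (Δ x) hx
      simp only [LinearMap.comp_apply, LinearMap.sub_apply] at heq
      rw [heq, stage2, sub_zero]
    exact Submodule.mem_comap.mpr
      ((mem_range_map_iff (𝒞 0) (projC 𝒞 0) hπ0_same hπ0_mem _).mpr key)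
  -- Part 2 : U is a subcoalgebra
  have part2 : ∀ x ∈ U, Δ x ∈ LinearMap.range
      (TensorProduct.map U.subtype U.subtype) := by
    intro x hx
    obtain ⟨W, hW⟩ := Submodule.exists_isCompl U
    set p : C →ₗ[k] C := U.subtype ∘ₗ Submodule.projectionOnto U W hW with hp
    have hp1 : ∀ y ∈ U, p y = y := by
      intro y hy
      have := Submodule.projectionOnto_apply_left hW ⟨y, hy⟩
      simp only [hp, LinearMap.comp_apply, Submodule.coe_subtype]
      exact congrArg Subtype.val this
    have hp2 : ∀ y : C, p y ∈ U := fun y =>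
      (Submodule.projectionOnto U W hW y).2
    have hx' : Δ x ∈ R00 := hx
    exact (mem_range_map_iff U p hp1 hp2 (Δ x)).mpr
      (map_pp_eq_self U p hp1 (Δ x) (fun φ => crMem x hx' φ) (fun φ => clMem x hx' φ))
  -- Part 3 : largest
  have part3 : ∀ V : Submodule k C, V ≤ 𝒞 0 →
      (∀ x ∈ V, Δ x ∈ LinearMap.range (TensorProduct.map V.subtype V.subtype)) →
      V ≤ U := by
    intro V hVle hVco x hx
    refine Submodule.mem_comap.mpr ?_
    obtain ⟨u, hu⟩ := hVco x hx
    refine ⟨TensorProduct.map (Submodule.inclusion hVle) (Submodule.inclusion hVle) u, ?_⟩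
    rw [← LinearMap.comp_apply, ← TensorProduct.map_comp,
      Submodule.subtype_comp_inclusion, hu]
  -- Part 4 : subalgebra
  have part4a : (1 : C) ∈ U := by
    refine Submodule.mem_comap.mpr ⟨(⟨1, h1mem⟩ : 𝒞 0) ⊗ₜ[k] (⟨1, h1mem⟩ : 𝒞 0), ?_⟩
    rw [hΔ_one]
    simp
  have part4b : ∀ x y : C, x ∈ U → y ∈ U → x * y ∈ U := by
    have inner : ∀ a ∈ 𝒞 0, ∀ b ∈ 𝒞 0, ∀ s ∈ R00, M2 (a ⊗ₜ[k] b) s ∈ R00 := by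
      intro a ha b hb
      refine R_ind_mem (𝒞 0) (𝒞 0) R00 (M2 (a ⊗ₜ[k] b)) (fun c hc d hd => ?_)
      rw [hM2 0 0 a b hb c hc d]
      have hval : ((-1 : ℤ) ^ ((0 : ZMod 2).val * (0 : ZMod 2).val)) = 1 := by
        norm_num
      rw [hval, one_smul]
      have hac : a * c ∈ 𝒞 0 := by simpa using SetLike.mul_mem_graded ha hc
      have hbd : b * d ∈ 𝒞 0 := by simpa using SetLike.mul_mem_graded hb hd
      exact ⟨(⟨a * c, hac⟩ : 𝒞 0) ⊗ₜ[k] (⟨b * d, hbd⟩ : 𝒞 0), by simp⟩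
    intro x y hx hy
    refine Submodule.mem_comap.mpr ?_
    rw [hΔ_mul]
    have hx' : Δ x ∈ R00 := hx
    have hy' : Δ y ∈ R00 := hy
    exact R_ind_mem (𝒞 0) (𝒞 0) R00 (M2.flip (Δ y))
      (fun a ha b hb => inner a ha b hb (Δ y) hy') (Δ x) hx'
  -- Part 5 : primitives
  have part5 : LinearMap.ker (Δ - ((TensorProduct.mk k C C) 1 +
        (TensorProduct.mk k C C).flip 1)) ⊓ 𝒞 0
      = LinearMap.ker (Δ - ((TensorProduct.mk k C C) 1 +
        (TensorProduct.mk k C C).flip 1)) ⊓ U := by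
    apply le_antisymm
    · rintro x hx
      rw [Submodule.mem_inf] at hx ⊢
      obtain ⟨hP, hx0⟩ := hx
      refine ⟨hP, Submodule.mem_comap.mpr ?_⟩
      have hΔx : Δ x = 1 ⊗ₜ[k] x + x ⊗ₜ[k] 1 := by
        have h := LinearMap.mem_ker.mp hP
        have h2 : Δ x - (1 ⊗ₜ[k] x + x ⊗ₜ[k] 1) = 0 := by
          simpa [LinearMap.sub_apply, LinearMap.add_apply, TensorProduct.mk_apply,
            LinearMap.flip_apply] using h
        exact sub_eq_zero.mp h2
      rw [hΔx]
      exact ⟨(⟨1, h1mem⟩ : 𝒞 0) ⊗ₜ[k] (⟨x, hx0⟩ : 𝒞 0) +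
        (⟨x, hx0⟩ : 𝒞 0) ⊗ₜ[k] (⟨1, h1mem⟩ : 𝒞 0), by simp⟩
    · rintro x hx
      rw [Submodule.mem_inf] at hx ⊢
      exact ⟨hx.1, part1 hx.2⟩
  exact ⟨part1, part2, part3, ⟨part4a, part4b⟩, part5⟩
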